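/- Let n, s ≥ 0 and r ≥ 1 be integers. For each j with 0 ≤ j ≤ r−1, the boundary quadrature weight λ_0^{(j)} attached to the j-th derivative at the left endpoint a is strictly positive: λ_0^{(j)} > 0. -/

import Mathlib

open MeasureTheory

/-- The generalized Gauss–Radau/Gauss–Lobatto quadrature
`Q_{n,r,s}(f) = Σ_{j<r} λ₀^{(j)} f^{(j)}(a) + Σ_{j<n} λ_j f(τ_j) + Σ_{j<s} (-1)^j λ_{n+1}^{(j)} f^{(j)}(b)`,
where derivatives are taken within `[a,b]`. -/
noncomputable def quad (a b : ℝ) (n r s : ℕ) (τ w0 wi w1 : ℕ → ℝ) (f : ℝ → ℝ) : ℝ :=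
  (∑ j ∈ Finset.range r, w0 j * iteratedDerivWithin j f (Set.Icc a b) a)
  + (∑ j ∈ Finset.range n, wi j * f (τ j))
  + (∑ j ∈ Finset.range s, (-1 : ℝ) ^ j * w1 j * iteratedDerivWithin j f (Set.Icc a b) b)

namespace GaussRadauAux

open Polynomial Finset

lemma iterDW (a b : ℝ) (hab : a < b) (p : ℝ[X]) (k : ℕ) :
    ∀ x ∈ Set.Icc a b,
      iteratedDerivWithin k (fun t => p.eval t) (Set.Icc a b) x
        = (derivative^[k] p).eval x := by
  induction k generalizing p with
  | zero => intro x hx; simp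
  | succ k ih =>
    intro x hx
    have hu : UniqueDiffOn ℝ (Set.Icc a b) := uniqueDiffOn_Icc hab
    rw [iteratedDerivWithin_succ']
    have he : Set.EqOn (derivWithin (fun t => p.eval t) (Set.Icc a b))
        (fun t => p.derivative.eval t) (Set.Icc a b) := fun y hy =>
      p.derivWithin (hu y hy)
    rw [iteratedDerivWithin_congr he hx, ih p.derivative x hx,
      Function.iterate_succ_apply]

lemma iter_deriv_comp (P : ℝ[X]) (a : ℝ) (k : ℕ) :
    derivative^[k] (P.comp (X - C a)) = (derivative^[k] P).comp (X - C a) := by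
  induction k generalizing P with
  | zero => simp
  | succ k ih =>
    rw [Function.iterate_succ_apply, Function.iterate_succ_apply, derivative_comp]
    simp [ih]

lemma coeff_mul_nonneg {p q : ℝ[X]} (hp : ∀ k, 0 ≤ p.coeff k) (hq : ∀ k, 0 ≤ q.coeff k) :
    ∀ k, 0 ≤ (p * q).coeff k := fun k => by
  rw [coeff_mul]; exact Finset.sum_nonneg fun x _ => mul_nonneg (hp _) (hq _)

lemma coeff_pow_nonneg {p : ℝ[X]} (hp : ∀ k, 0 ≤ p.coeff k) (n : ℕ) :
    ∀ k, 0 ≤ (p ^ n).coeff k := by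
  induction n with
  | zero => intro k; rw [pow_zero, coeff_one]; split_ifs <;> norm_num
  | succ n ih => intro k; rw [pow_succ]; exact coeff_mul_nonneg ih hp k

lemma coeff_prod_nonneg {ι : Type*} (s : Finset ι) (f : ι → ℝ[X])
    (h : ∀ i ∈ s, ∀ k, 0 ≤ (f i).coeff k) :
    ∀ k, 0 ≤ (∏ i ∈ s, f i).coeff k := by
  classical
  induction s using Finset.induction with
  | empty => intro k; rw [Finset.prod_empty, coeff_one]; split_ifs <;> norm_num
  | insert _ _ hx ih =>
    rw [Finset.prod_insert hx]
    exact coeff_mul_nonneg (h _ (Finset.mem_insert_self _ _))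
      (ih fun i hi => h i (Finset.mem_insert_of_mem hi))

lemma eval_nonneg' {p : ℝ[X]} (hp : ∀ k, 0 ≤ p.coeff k) {u : ℝ} (hu : 0 ≤ u) :
    0 ≤ p.eval u := by
  rw [eval_eq_sum_range]
  exact Finset.sum_nonneg fun i _ => mul_nonneg (hp i) (pow_nonneg hu i)

lemma eval_pos' {p : ℝ[X]} (hp : ∀ k, 0 ≤ p.coeff k) (h0 : 0 < p.coeff 0) {u : ℝ}
    (hu : 0 ≤ u) : 0 < p.eval u := by
  rw [eval_eq_sum_range, Finset.sum_range_succ']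
  refine add_pos_of_nonneg_of_pos
    (Finset.sum_nonneg fun i _ => mul_nonneg (hp _) (pow_nonneg hu _)) ?_
  simpa using h0

noncomputable def Qe (m : ℕ) (e : ℝ) : ℝ[X] :=
  ∑ k ∈ Finset.range (m + 1), C ((1 / e) ^ (k + 1)) * X ^ k

lemma Qe_coeff_nonneg (m : ℕ) {e : ℝ} (he : 0 < e) (k : ℕ) : 0 ≤ (Qe m e).coeff k := by
  rw [Qe, finset_sum_coeff]
  refine Finset.sum_nonneg fun i _ => ?_
  rw [coeff_C_mul, coeff_X_pow]
  split_ifs <;> [positivity; simp]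

lemma Qe_mul (m : ℕ) {e : ℝ} (he : e ≠ 0) :
    (C e - X) * Qe m e = 1 - C ((1 / e) ^ (m + 1)) * X ^ (m + 1) := by
  induction m with
  | zero =>
    have h1 : (C e : ℝ[X]) * C (1 / e) = 1 := by
      rw [← C_mul, mul_one_div_cancel he, C_1]
    rw [Qe]
    simp only [zero_add, pow_one, Finset.sum_range_one, pow_zero, mul_one]
    rw [sub_mul, h1]
    ring
  | succ m ih =>
    have hQ : Qe (m + 1) e = Qe m e + C ((1 / e) ^ (m + 2)) * X ^ (m + 1) := by
      rw [Qe, Qe, Finset.sum_range_succ]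
    have hce : (C e : ℝ[X]) * C ((1 / e) ^ (m + 2)) = C ((1 / e) ^ (m + 1)) := by
      rw [← C_mul]; congr 1; rw [show m + 2 = (m + 1) + 1 by ring, pow_succ, mul_left_comm, mul_one_div_cancel he, mul_one]
    calc (C e - X) * Qe (m + 1) e
        = (C e - X) * Qe m e + (C e * C ((1 / e) ^ (m + 2))) * X ^ (m + 1)
          - C ((1 / e) ^ (m + 2)) * (X ^ (m + 1) * X) := by rw [hQ]; ring
      _ = 1 - C ((1 / e) ^ (m + 2)) * X ^ (m + 2) := by rw [ih, hce]; ring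

lemma good_mul {m : ℕ} {A B : ℝ[X]} (hA : ∃ W, A = 1 + X ^ (m + 1) * W)
    (hB : ∃ W, B = 1 + X ^ (m + 1) * W) : ∃ W, A * B = 1 + X ^ (m + 1) * W := by
  obtain ⟨W1, rfl⟩ := hA; obtain ⟨W2, rfl⟩ := hB
  exact ⟨W1 + W2 + X ^ (m + 1) * (W1 * W2), by ring⟩

lemma good_pow {m : ℕ} {A : ℝ[X]} (hA : ∃ W, A = 1 + X ^ (m + 1) * W) (n : ℕ) :
    ∃ W, A ^ n = 1 + X ^ (m + 1) * W := by
  induction n with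
  | zero => exact ⟨0, by simp⟩
  | succ n ih => rw [pow_succ]; exact good_mul ih hA

lemma good_prod {m : ℕ} {ι : Type*} (s : Finset ι) (f : ι → ℝ[X])
    (h : ∀ i ∈ s, ∃ W, f i = 1 + X ^ (m + 1) * W) :
    ∃ W, ∏ i ∈ s, f i = 1 + X ^ (m + 1) * W := by
  classical
  induction s using Finset.induction with
  | empty => exact ⟨0, by simp⟩
  | insert _ _ hx ih =>
    rw [Finset.prod_insert hx]
    exact good_mul (h _ (Finset.mem_insert_self _ _))
      (ih fun i hi => h i (Finset.mem_insert_of_mem hi))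


lemma exists_q (m n s : ℕ) {c : ℝ} (hc : 0 < c) (d : ℕ → ℝ)
    (hd : ∀ i ∈ Finset.range n, 0 < d i) :
    ∃ q W : ℝ[X], q.natDegree ≤ m ∧ (∀ k, 0 ≤ q.coeff k) ∧ 0 < q.coeff 0 ∧
      ((C c - X) ^ s * ∏ i ∈ Finset.range n, (C (d i) - X) ^ 2) * q
        = 1 + X ^ (m + 1) * W := by
  classical
  set H : ℝ[X] := (C c - X) ^ s * ∏ i ∈ Finset.range n, (C (d i) - X) ^ 2 with hH
  set QQ : ℝ[X] := (Qe m c) ^ s * ∏ i ∈ Finset.range n, (Qe m (d i)) ^ 2 with hQQ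
  have hrearr : H * QQ
      = ((C c - X) * Qe m c) ^ s
        * ∏ i ∈ Finset.range n, ((C (d i) - X) * Qe m (d i)) ^ 2 := by
    simp_rw [mul_pow]
    rw [Finset.prod_mul_distrib, hH, hQQ]
    ring
  have hgood : ∃ W, H * QQ = 1 + X ^ (m + 1) * W := by
    rw [hrearr]
    refine good_mul (good_pow ⟨-C ((1 / c) ^ (m + 1)), ?_⟩ s)
      (good_prod _ _ fun i hi => good_pow ⟨-C ((1 / (d i)) ^ (m + 1)), ?_⟩ 2)
    · rw [Qe_mul m hc.ne']; ring
    · rw [Qe_mul m (hd i hi).ne']; ring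
  obtain ⟨W0, hW0⟩ := hgood
  have hQQnn : ∀ k, 0 ≤ QQ.coeff k := by
    rw [hQQ]
    exact coeff_mul_nonneg (coeff_pow_nonneg (Qe_coeff_nonneg m hc) s)
      (coeff_prod_nonneg _ _ fun i hi => coeff_pow_nonneg (Qe_coeff_nonneg m (hd i hi)) 2)
  have hmonic : ((X : ℝ[X]) ^ (m + 1)).Monic := monic_X_pow _
  set q : ℝ[X] := QQ %ₘ (X ^ (m + 1)) with hq
  set D : ℝ[X] := QQ /ₘ (X ^ (m + 1)) with hD
  have hsplit : QQ = q + X ^ (m + 1) * D := (modByMonic_add_div QQ _).symm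
  have hqdeg : q.natDegree ≤ m := by
    by_cases hq0 : q = 0
    · simp [hq0]
    · have h1 := degree_modByMonic_lt QQ hmonic
      rw [degree_X_pow] at h1
      exact Nat.lt_succ_iff.mp ((natDegree_lt_iff_degree_lt hq0).mpr h1)
  have hqc : ∀ k ≤ m, q.coeff k = QQ.coeff k := by
    intro k hk
    have h2 : (X ^ (m + 1) * D).coeff k = 0 :=
      X_pow_dvd_iff.mp (dvd_mul_right _ _) k (by omega)
    calc q.coeff k = q.coeff k + (X ^ (m + 1) * D).coeff k := by rw [h2, add_zero]
      _ = QQ.coeff k := by rw [← coeff_add, ← hsplit]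
  have hqnn : ∀ k, 0 ≤ q.coeff k := by
    intro k
    rcases le_or_gt k m with hk | hk
    · rw [hqc k hk]; exact hQQnn k
    · rw [coeff_eq_zero_of_natDegree_lt (lt_of_le_of_lt hqdeg hk)]
  have hfinal : H * q = 1 + X ^ (m + 1) * (W0 - H * D) := by
    linear_combination hW0 - H * hsplit
  have hq0pos : 0 < q.coeff 0 := by
    have h00 : H.coeff 0 * q.coeff 0 = 1 := by
      have := congrArg (fun P : ℝ[X] => P.coeff 0) hfinal
      simpa [mul_coeff_zero, coeff_X_pow] using this
    refine (hqnn 0).lt_of_ne fun h => ?_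
    rw [← h] at h00
    simp at h00
  exact ⟨q, W0 - H * D, hqdeg, hqnn, hq0pos, hfinal⟩
end GaussRadauAux



open Polynomial Finset

/-- the boundary weights `λ₀^{(j)}`, `0 ≤ j ≤ r-1`, attached to the
derivatives at the left endpoint `a` are strictly positive. -/
theorem left_boundary_weights_pos
    (a b : ℝ) (hab : a < b)
    (μ : Measure ℝ) [IsFiniteMeasure μ]
    (hsupp : μ (Set.Icc a b)ᶜ = 0)
    (hinf : {x | x ∈ Set.Ioo a b ∧ ∀ ε > 0, 0 < μ (Set.Ioo (x - ε) (x + ε))}.Infinite)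
    (n r s : ℕ) (hr : 1 ≤ r)
    (τ w0 wi w1 : ℕ → ℝ)
    (hτab : ∀ j < n, τ j ∈ Set.Ioo a b)
    (hτmono : ∀ i j, i < j → j < n → τ i < τ j)
    (hex : ∀ p : Polynomial ℝ, p.natDegree + 1 ≤ 2 * n + r + s →
      quad a b n r s τ w0 wi w1 (fun t => p.eval t) = ∫ t, p.eval t ∂μ)
    (j : ℕ) (hj : j ≤ r - 1) :
    0 < w0 j := by
  classical
  obtain ⟨m, hm⟩ : ∃ m, r = j + m + 1 := ⟨r - 1 - j, by omega⟩
  set c : ℝ := b - a with hc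
  have hcpos : 0 < c := sub_pos.mpr hab
  set d : ℕ → ℝ := fun i => τ i - a with hd
  have hdpos : ∀ i ∈ Finset.range n, 0 < d i := fun i hi =>
    sub_pos.mpr (hτab i (Finset.mem_range.mp hi)).1
  obtain ⟨q, W, hqdeg, hqnn, hq0, hHq⟩ := GaussRadauAux.exists_q m n s hcpos d hdpos
  set H : ℝ[X] := (C c - X) ^ s * ∏ i ∈ Finset.range n, (C (d i) - X) ^ 2 with hH
  set G : ℝ[X] := H * q with hG
  set P : ℝ[X] := X ^ j * G with hP
  set p : ℝ[X] := P.comp (X - C a) with hp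
  -- degree bound
  have hlin : ∀ e : ℝ, (C e - X : ℝ[X]).natDegree ≤ 1 := fun e =>
    (natDegree_sub_le _ _).trans (by simp)
  have hdegH : H.natDegree ≤ s + 2 * n := by
    rw [hH]
    refine (natDegree_mul_le).trans (add_le_add ?_ ?_)
    · exact (natDegree_pow_le).trans (by
        have := hlin c
        calc s * (C c - X : ℝ[X]).natDegree ≤ s * 1 := Nat.mul_le_mul_left _ this
          _ = s := mul_one s)
    · refine (natDegree_prod_le _ _).trans ?_
      have h2 : ∀ i ∈ Finset.range n, ((C (d i) - X : ℝ[X]) ^ 2).natDegree ≤ 2 := fun i _ =>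
        (natDegree_pow_le).trans (by have := hlin (d i); omega)
      calc ∑ i ∈ Finset.range n, ((C (d i) - X : ℝ[X]) ^ 2).natDegree
          ≤ ∑ _i ∈ Finset.range n, 2 := Finset.sum_le_sum h2
        _ = 2 * n := by simp [mul_comm]
  have hdegP : P.natDegree ≤ j + (s + 2 * n) + m := by
    rw [hP]
    refine (natDegree_mul_le).trans ?_
    have h1 : ((X : ℝ[X]) ^ j).natDegree ≤ j := by simp
    have h2 : G.natDegree ≤ (s + 2 * n) + m := by
      rw [hG]
      exact (natDegree_mul_le).trans (add_le_add hdegH hqdeg)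
    omega
  have hdegp : p.natDegree + 1 ≤ 2 * n + r + s := by
    rw [hp, natDegree_comp]
    have : (X - C a : ℝ[X]).natDegree = 1 := natDegree_X_sub_C a
    rw [this, mul_one]
    omega
  -- iterated derivatives within Icc
  have hUD : UniqueDiffOn ℝ (Set.Icc a b) := uniqueDiffOn_Icc hab
  have haI : a ∈ Set.Icc a b := Set.left_mem_Icc.mpr hab.le
  have hbI : b ∈ Set.Icc a b := Set.right_mem_Icc.mpr hab.le
  have hkey : ∀ (k : ℕ) (x : ℝ), x ∈ Set.Icc a b →
      iteratedDerivWithin k (fun t => p.eval t) (Set.Icc a b) x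
        = (derivative^[k] P).eval (x - a) := by
    intro k x hx
    rw [GaussRadauAux.iterDW a b hab p k x hx, hp, GaussRadauAux.iter_deriv_comp, eval_comp]
    simp
  -- coefficients of P below r
  have hcoeffP : ∀ k < r, P.coeff k = if k = j then 1 else 0 := by
    intro k hk
    rcases lt_trichotomy k j with hkj | hkj | hkj
    · rw [if_neg hkj.ne, hP]
      exact X_pow_dvd_iff.mp (dvd_mul_right _ _) k hkj
    · rw [if_pos hkj, hkj]
      have h0 : P.coeff (0 + j) = G.coeff 0 := by rw [hP]; exact coeff_X_pow_mul G j 0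
      have hG0 : G.coeff 0 = 1 := by
        rw [hHq]
        simp [coeff_add, mul_coeff_zero, coeff_X_pow]
      rw [zero_add] at h0
      rw [h0, hG0]
    · rw [if_neg hkj.ne']
      have h1 : P.coeff ((k - j) + j) = G.coeff (k - j) := by
        rw [hP]; exact coeff_X_pow_mul G j (k - j)
      have hkj' : k - j + j = k := Nat.sub_add_cancel hkj.le
      have hGc : G.coeff (k - j) = 0 := by
        rw [hHq, coeff_add]
        have e1 : (1 : ℝ[X]).coeff (k - j) = 0 := by
          rw [coeff_one]; exact if_neg (by omega)
        have e2 : ((X : ℝ[X]) ^ (m + 1) * W).coeff (k - j) = 0 :=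
          X_pow_dvd_iff.mp (dvd_mul_right _ _) _ (by omega)
        rw [e1, e2, add_zero]
      rw [hkj'] at h1
      rw [h1, hGc]
  have hder0 : ∀ k : ℕ, (derivative^[k] P).eval 0 = (Nat.factorial k : ℝ) * P.coeff k := by
    intro k
    rw [← coeff_zero_eq_eval_zero, Polynomial.coeff_iterate_derivative]
    rw [zero_add, Nat.descFactorial_self, nsmul_eq_mul]
  -- evaluation of p
  have hpev : ∀ t : ℝ, p.eval t = P.eval (t - a) := fun t => by
    rw [hp, eval_comp]; simp
  -- sums
  have hjr : j < r := by omega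
  have hsum1 : ∑ k ∈ Finset.range r,
      w0 k * iteratedDerivWithin k (fun t => p.eval t) (Set.Icc a b) a
      = w0 j * (Nat.factorial j : ℝ) := by
    rw [Finset.sum_eq_single j]
    · rw [hkey j a haI, sub_self, hder0, hcoeffP j hjr, if_pos rfl, mul_one]
    · intro k hk hkj
      rw [hkey k a haI, sub_self, hder0, hcoeffP k (Finset.mem_range.mp hk), if_neg hkj]
      ring
    · intro h; exact absurd (Finset.mem_range.mpr hjr) h
  have hsum2 : ∑ k ∈ Finset.range n, wi k * p.eval (τ k) = 0 := by
    refine Finset.sum_eq_zero fun i hi => ?_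
    have hPe : P.eval (τ i - a) = 0 := by
      rw [hP, hG, hH, eval_mul, eval_mul, eval_mul, eval_prod]
      have hz : ∏ k ∈ Finset.range n, ((C (d k) - X : ℝ[X]) ^ 2).eval (τ i - a) = 0 :=
        Finset.prod_eq_zero hi (by simp [hd])
      rw [hz]
      ring
    rw [hpev, hPe, mul_zero]
  have hsum3 : ∀ k < s, (derivative^[k] P).eval (b - a) = 0 := by
    intro k hk
    have hneg : (C c - X : ℝ[X]) ^ s = (X - C c) ^ s * (-1) ^ s := by
      rw [← mul_pow]; congr 1; ring
    have hdvd : (X - C c : ℝ[X]) ^ s ∣ P :=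
      ⟨(-1) ^ s * X ^ j * (∏ i ∈ Finset.range n, (C (d i) - X) ^ 2) * q, by
        rw [hP, hG, hH, hneg]; ring⟩
    obtain ⟨V, hV⟩ := Polynomial.pow_sub_dvd_iterate_derivative_of_pow_dvd k hdvd
    rw [hV, eval_mul, eval_pow, eval_sub, eval_X, eval_C]
    have hz : b - a - c = 0 := by rw [hc]; ring
    rw [hz, zero_pow (by omega), zero_mul]
  have hquad : quad a b n r s τ w0 wi w1 (fun t => p.eval t) = w0 j * (Nat.factorial j : ℝ) := by
    rw [quad, hsum1]
    have h3 : ∑ k ∈ Finset.range s,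
        (-1 : ℝ) ^ k * w1 k * iteratedDerivWithin k (fun t => p.eval t) (Set.Icc a b) b = 0 :=
      Finset.sum_eq_zero fun k hk => by
        rw [hkey k b hbI, hsum3 k (Finset.mem_range.mp hk), mul_zero]
    rw [h3, add_zero]
    have h2 : ∑ k ∈ Finset.range n, wi k * (fun t => p.eval t) (τ k) = 0 := hsum2
    rw [h2, add_zero]
  -- nonnegativity of p on [a,b]
  have hpnn : ∀ t ∈ Set.Icc a b, 0 ≤ p.eval t := by
    intro t ht
    rw [hpev, hP, hG, eval_mul, eval_mul]
    have h1 : (0:ℝ) ≤ ((X : ℝ[X]) ^ j).eval (t - a) := by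
      simp only [eval_pow, eval_X]
      exact pow_nonneg (by linarith [ht.1]) j
    have h2 : (0:ℝ) ≤ H.eval (t - a) := by
      rw [hH, eval_mul, eval_pow, eval_sub, eval_C, eval_X, eval_prod]
      refine mul_nonneg (pow_nonneg (by rw [hc]; linarith [ht.2]) s)
        (Finset.prod_nonneg fun i _ => ?_)
      simp only [eval_pow, eval_sub, eval_C, eval_X]
      positivity
    have h3 : (0:ℝ) ≤ q.eval (t - a) := GaussRadauAux.eval_nonneg' hqnn (by linarith [ht.1])
    exact mul_nonneg h1 (mul_nonneg h2 h3)
  -- pick a good point x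
  have hfin : Set.Finite (τ '' Set.Iio n) := (Set.finite_Iio n).image τ
  obtain ⟨x, hx⟩ := (hinf.diff hfin).nonempty
  obtain ⟨⟨hxab, hxμ⟩, hxτ⟩ := hx
  have hxτ' : ∀ i < n, τ i ≠ x := fun i hi h => hxτ ⟨i, hi, h⟩
  have hpx : 0 < p.eval x := by
    rw [hpev, hP, hG, eval_mul, eval_mul]
    have h1 : (0:ℝ) < ((X : ℝ[X]) ^ j).eval (x - a) := by
      simp only [eval_pow, eval_X]
      exact pow_pos (sub_pos.mpr hxab.1) j
    have h2 : (0:ℝ) < H.eval (x - a) := by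
      rw [hH, eval_mul, eval_pow, eval_sub, eval_C, eval_X, eval_prod]
      refine mul_pos (pow_pos (by rw [hc]; linarith [hxab.2]) s)
        (Finset.prod_pos fun i hi => ?_)
      simp only [eval_pow, eval_sub, eval_C, eval_X]
      have hne : d i - (x - a) ≠ 0 := by
        have := hxτ' i (Finset.mem_range.mp hi)
        rw [hd]
        simp only
        intro hcon
        exact this (by linarith)
      positivity
    have h3 : (0:ℝ) < q.eval (x - a) :=
      GaussRadauAux.eval_pos' hqnn hq0 (by linarith [hxab.1])
    exact mul_pos h1 (mul_pos h2 h3)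
  -- integral positivity
  have hμae : ∀ᵐ t ∂μ, t ∈ Set.Icc a b := by
    rw [MeasureTheory.ae_iff]
    exact hsupp
  have hcont : Continuous fun t : ℝ => p.eval t := Polynomial.continuous p
  set c0 : ℝ := p.eval x / 2 with hc0
  have hc0pos : 0 < c0 := by positivity
  have hopen : IsOpen ({y : ℝ | c0 < p.eval y} ∩ Set.Ioo a b) :=
    (isOpen_lt continuous_const hcont).inter isOpen_Ioo
  have hxmem : x ∈ {y : ℝ | c0 < p.eval y} ∩ Set.Ioo a b :=
    ⟨by rw [Set.mem_setOf_eq, hc0]; linarith, hxab⟩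
  obtain ⟨ε, hε, hball⟩ := Metric.isOpen_iff.mp hopen x hxmem
  rw [Real.ball_eq_Ioo] at hball
  set S : Set ℝ := Set.Ioo (x - ε) (x + ε) with hS
  have hSsub : ∀ y ∈ S, c0 < p.eval y := fun y hy => (hball hy).1
  have hind : Integrable (S.indicator fun _ => c0) μ :=
    (integrable_const c0).indicator measurableSet_Ioo
  obtain ⟨M, hM⟩ :=
    (isCompact_Icc : IsCompact (Set.Icc a b)).exists_bound_of_continuousOn hcont.continuousOn
  have hpint : Integrable (fun t => p.eval t) μ := by
    refine Integrable.mono' (integrable_const M) hcont.aestronglyMeasurable ?_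
    filter_upwards [hμae] with t ht using hM t ht
  have hmono : (S.indicator fun _ => c0) ≤ᵐ[μ] fun t => p.eval t := by
    filter_upwards [hμae] with t ht
    by_cases hts : t ∈ S
    · rw [Set.indicator_of_mem hts]; exact (hSsub t hts).le
    · rw [Set.indicator_of_notMem hts]; exact hpnn t ht
  have hint1 : ∫ t, (S.indicator fun _ => c0) t ∂μ = (μ S).toReal * c0 := by
    rw [MeasureTheory.integral_indicator_const c0 measurableSet_Ioo, smul_eq_mul]; rfl
  have hintpos : 0 < ∫ t, p.eval t ∂μ := by
    have h1 : 0 < (μ S).toReal * c0 :=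
      mul_pos (ENNReal.toReal_pos (hxμ ε hε).ne' (measure_ne_top μ S)) hc0pos
    calc (0:ℝ) < (μ S).toReal * c0 := h1
      _ = ∫ t, (S.indicator fun _ => c0) t ∂μ := hint1.symm
      _ ≤ ∫ t, p.eval t ∂μ := integral_mono_ae hind hpint hmono
  have hfinal : 0 < w0 j * (Nat.factorial j : ℝ) := by
    have := hex p hdegp
    rw [hquad] at this
    rw [this]
    exact hintpos
  have hfact : (0:ℝ) < (Nat.factorial j : ℝ) := by
    exact_mod_cast j.factorial_pos
  nlinarith [hfinal, hfact]
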